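/- The number of partitions that are simultaneously t1-core and t2-core, where t1 and t2 are coprime positive integers, equals (t1+t2-1)!/(t1! * t2!). -/

import Mathlib

def hook (Y : YoungDiagram) (i j : ℕ) : ℕ :=
  (Y.rowLen i - j) + (Y.colLen j - i) - 1

def IsCore (Y : YoungDiagram) (t : ℕ) : Prop :=
  ∀ c ∈ Y.cells, ¬ (t ∣ hook Y c.1 c.2)

def DistinctParts (Y : YoungDiagram) : Prop :=
  ∀ i : ℕ, 0 < Y.rowLen (i + 1) → Y.rowLen (i + 1) < Y.rowLen i

def betaSet (Y : YoungDiagram) : Finset ℕ :=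
  (Finset.range (Y.colLen 0)).image (fun i => Y.rowLen i + (Y.colLen 0 - 1 - i))

namespace Anderson

def Closed (t : ℕ) (B : Finset ℕ) : Prop := ∀ b ∈ B, t ≤ b → b - t ∈ B

variable (Y : YoungDiagram)

def hb (i : ℕ) : ℕ := Y.rowLen i + (Y.colLen 0 - 1 - i)
def gb (j : ℕ) : ℕ := j + (Y.colLen 0 - Y.colLen j)

lemma colLen_le (j : ℕ) : Y.colLen j ≤ Y.colLen 0 := Y.colLen_anti 0 j (Nat.zero_le _)

lemma mem_betaSet {m : ℕ} : m ∈ betaSet Y ↔ ∃ i < Y.colLen 0, hb Y i = m := by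
  simp [betaSet, hb]

lemma hook_add_gb {i j : ℕ} (hc : (i, j) ∈ Y) : hook Y i j + gb Y j = hb Y i := by
  have h1 : j < Y.rowLen i := YoungDiagram.mem_iff_lt_rowLen.mp hc
  have h2 : i < Y.colLen j := YoungDiagram.mem_iff_lt_colLen.mp hc
  have h3 := colLen_le Y j
  unfold hook gb hb
  omega

lemma hb_ne_gb {i j : ℕ} (hi : i < Y.colLen 0) : hb Y i ≠ gb Y j := by
  have h3 := colLen_le Y j
  by_cases hmem : (i, j) ∈ Y
  · have h1 : j < Y.rowLen i := YoungDiagram.mem_iff_lt_rowLen.mp hmem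
    have h2 : i < Y.colLen j := YoungDiagram.mem_iff_lt_colLen.mp hmem
    unfold hb gb; omega
  · have h1 : Y.rowLen i ≤ j := by
      by_contra hh
      exact hmem (YoungDiagram.mem_iff_lt_rowLen.mpr (by omega))
    have h2 : Y.colLen j ≤ i := by
      by_contra hh
      exact hmem (YoungDiagram.mem_iff_lt_colLen.mpr (by omega))
    unfold hb gb; omega

lemma gb_ge (j : ℕ) : j ≤ gb Y j := Nat.le_add_right _ _

lemma gb_zero : gb Y 0 = 0 := by unfold gb; omega

lemma exists_gb {m : ℕ} (hm : m ∉ betaSet Y) : ∃ j, gb Y j = m := by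
  classical
  set P : ℕ → Prop := fun j => gb Y j ≤ m with hP
  have hP0 : P 0 := by rw [hP]; simp [gb_zero]
  set j := Nat.findGreatest P m with hj
  have hPj : P j := Nat.findGreatest_spec (Nat.zero_le m) hP0
  by_cases hjm : j = m
  · -- gb m ≤ m and gb m ≥ m
    refine ⟨m, ?_⟩
    have h1 : gb Y m ≤ m := by
      have := hPj
      simp only [hP] at this
      rwa [hjm] at this
    have h2 := gb_ge Y m
    omega
  · have hjlt : j < m := lt_of_le_of_ne (Nat.findGreatest_le m) hjm
    have hnext : ¬ P (j + 1) :=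
      Nat.findGreatest_is_greatest (Nat.lt_succ_self j) (by omega)
    by_cases heq : gb Y j = m
    · exact ⟨j, heq⟩
    · exfalso
      apply hm
      have hlt : gb Y j < m := lt_of_le_of_ne hPj heq
      have hgt : m < gb Y (j + 1) := by omega
      have h3 := colLen_le Y j
      have h4 := colLen_le Y (j + 1)
      have h5 : Y.colLen (j+1) ≤ Y.colLen j := Y.colLen_anti j (j+1) (by omega)
      set c := Y.colLen j
      set c' := Y.colLen (j + 1)
      set k := Y.colLen 0
      -- m = gb j + e with 1 ≤ e ≤ c - c'
      set e := m - gb Y j with he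
      have hgbj : gb Y j = j + (k - c) := rfl
      have hgbj1 : gb Y (j+1) = (j+1) + (k - c') := rfl
      have he1 : 1 ≤ e := by omega
      have he2 : e ≤ c - c' := by omega
      set i' := c - e with hi'
      have hi'k : i' < k := by omega
      have hmem1 : (i', j) ∈ Y := YoungDiagram.mem_iff_lt_colLen.mpr (by omega)
      have hmem2 : (i', j + 1) ∉ Y := by
        intro hcon
        have := YoungDiagram.mem_iff_lt_colLen.mp hcon
        omega
      have hr1 : j < Y.rowLen i' := YoungDiagram.mem_iff_lt_rowLen.mp hmem1
      have hr2 : Y.rowLen i' ≤ j + 1 := by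
        by_contra hh
        exact hmem2 (YoungDiagram.mem_iff_lt_rowLen.mpr (by omega))
      rw [mem_betaSet]
      refine ⟨i', hi'k, ?_⟩
      unfold hb
      omega

lemma gb_lt_hb_iff {i j : ℕ} (hi : i < Y.colLen 0) :
    gb Y j < hb Y i ↔ j < Y.rowLen i := by
  constructor
  · intro hlt
    by_contra hh
    push_neg at hh
    have h2 : Y.colLen j ≤ Y.colLen (Y.rowLen i) := Y.colLen_anti _ _ hh
    have h4 : Y.colLen (Y.rowLen i) ≤ i := by
      by_contra hcon
      have := YoungDiagram.mem_iff_lt_rowLen.mp (YoungDiagram.mem_iff_lt_colLen.mpr (by omega : i < Y.colLen (Y.rowLen i)))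
      omega
    have h3 := colLen_le Y j
    unfold gb hb at hlt
    omega
  · intro hlt
    have hmem : (i, j) ∈ Y := YoungDiagram.mem_iff_lt_rowLen.mpr hlt
    have h2 : i < Y.colLen j := YoungDiagram.mem_iff_lt_colLen.mp hmem
    have h3 := colLen_le Y j
    unfold gb hb
    omega

lemma closed_sub_mul {t : ℕ} {B : Finset ℕ} (cl : Closed t B) :
    ∀ (l : ℕ) {b : ℕ}, b ∈ B → t * l ≤ b → b - t * l ∈ B := by
  intro l
  induction l with
  | zero => intro b hb _; simpa using hb
  | succ l ih =>
    intro b hb hle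
    rw [Nat.mul_succ] at hle ⊢
    have h1 : t * l ≤ b := by omega
    have h2 := cl _ (ih hb h1) (by omega)
    have h3 : b - t * l - t = b - (t * l + t) := by omega
    rwa [h3] at h2

theorem isCore_iff {t : ℕ} (ht : 0 < t) : IsCore Y t ↔ Closed t (betaSet Y) := by
  constructor
  · intro core b hbmem hbt
    obtain ⟨i, hi, rfl⟩ := (mem_betaSet Y).mp hbmem
    by_contra hnot
    obtain ⟨j, hgj⟩ := exists_gb Y hnot
    have hjlt : j < Y.rowLen i := (gb_lt_hb_iff Y hi).mp (by omega)
    have hcell : (i, j) ∈ Y := YoungDiagram.mem_iff_lt_rowLen.mpr hjlt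
    have hhook := hook_add_gb Y hcell
    have : hook Y i j = t := by omega
    exact core (i, j) ((YoungDiagram.mem_cells _).mpr hcell) (this ▸ dvd_refl t)
  · rintro cl ⟨i, j⟩ hc hdvd
    have hcell : (i, j) ∈ Y := (YoungDiagram.mem_cells _).mp hc
    have hik : i < Y.colLen 0 := lt_of_lt_of_le (YoungDiagram.mem_iff_lt_colLen.mp hcell) (colLen_le Y j)
    have hhook := hook_add_gb Y hcell
    have hne := hb_ne_gb Y (i := i) (j := j) hik
    obtain ⟨q, hq⟩ := hdvd
    have hq' : hook Y i j = t * q := hq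
    have hmem0 : hb Y i ∈ betaSet Y := (mem_betaSet Y).mpr ⟨i, hik, rfl⟩
    have hle : t * q ≤ hb Y i := by omega
    have := closed_sub_mul cl q hmem0 hle
    have heq : hb Y i - t * q = gb Y j := by omega
    rw [heq] at this
    obtain ⟨i', hi', hieq⟩ := (mem_betaSet Y).mp this
    exact hb_ne_gb Y hi' hieq

lemma hb_strict {i i' : ℕ} (h : i < i') (hi' : i' < Y.colLen 0) : hb Y i' < hb Y i := by
  have h1 : Y.rowLen i' ≤ Y.rowLen i := Y.rowLen_anti i i' (le_of_lt h)
  unfold hb; omega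

lemma card_betaSet : (betaSet Y).card = Y.colLen 0 := by
  rw [betaSet, Finset.card_image_of_injOn, Finset.card_range]
  intro a ha b hb' hab
  simp only [Finset.coe_range, Set.mem_Iio] at ha hb'
  by_contra hne
  rcases Nat.lt_or_ge a b with hl | hg
  · exact absurd hab (Nat.ne_of_gt (hb_strict Y hl hb'))
  · have : b < a := by omega
    exact absurd hab.symm (Nat.ne_of_gt (hb_strict Y this ha))

lemma rank_betaSet {i : ℕ} (hi : i < Y.colLen 0) :
    ((betaSet Y).filter (fun b => hb Y i < b)).card = i := by
  have : (betaSet Y).filter (fun b => hb Y i < b) = (Finset.range i).image (hb Y) := by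
    ext b
    simp only [Finset.mem_filter, Finset.mem_image, Finset.mem_range]
    constructor
    · rintro ⟨hmem, hlt⟩
      obtain ⟨i', hi', rfl⟩ := (mem_betaSet Y).mp hmem
      refine ⟨i', ?_, rfl⟩
      by_contra hh
      push_neg at hh
      rcases Nat.eq_or_lt_of_le hh with he | hl
      · subst he; omega
      · exact absurd hlt (not_lt.mpr (le_of_lt (hb_strict Y hl hi')))
    · rintro ⟨i', hi', rfl⟩
      exact ⟨(mem_betaSet Y).mpr ⟨i', by omega, rfl⟩, hb_strict Y hi' hi⟩
  rw [this, Finset.card_image_of_injOn, Finset.card_range]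
  intro a ha b hb' hab
  simp only [Finset.coe_range, Set.mem_Iio] at ha hb'
  by_contra hne
  rcases Nat.lt_or_ge a b with hl | hg
  · exact absurd hab (Nat.ne_of_gt (hb_strict Y hl (by omega)))
  · have : b < a := by omega
    exact absurd hab.symm (Nat.ne_of_gt (hb_strict Y this (by omega)))

lemma rowLen_zero_of_ge {i : ℕ} (hi : Y.colLen 0 ≤ i) : Y.rowLen i = 0 := by
  by_contra hh
  have : (i, 0) ∈ Y := YoungDiagram.mem_iff_lt_rowLen.mpr (by omega)
  have := YoungDiagram.mem_iff_lt_colLen.mp this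
  omega

section Abacus

lemma initialSeg (S : Finset ℕ) (h : ∀ j, j + 1 ∈ S → j ∈ S) : S = Finset.range S.card := by
  have hdown : ∀ d a, a ∈ S → a - d ∈ S := by
    intro d
    induction d with
    | zero => intro a ha; simpa using ha
    | succ d ih =>
      intro a ha
      have h1 := ih a ha
      rcases Nat.eq_zero_or_pos (a - d) with hz | hp
      · have : a - (d + 1) = a - d := by omega
        rw [this]; exact h1
      · have : a - d = (a - (d + 1)) + 1 := by omega
        rw [this] at h1
        exact h _ h1
  ext m
  rw [Finset.mem_range]
  constructor
  · intro hm
    have hsub : Finset.range (m + 1) ⊆ S := by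
      intro b hb'
      rw [Finset.mem_range] at hb'
      have := hdown (m - b) m hm
      have heq : m - (m - b) = b := by omega
      rwa [heq] at this
    have := Finset.card_le_card hsub
    rw [Finset.card_range] at this
    omega
  · intro hm
    by_contra hnot
    have hsub : S ⊆ Finset.range m := by
      intro s hs
      rw [Finset.mem_range]
      by_contra hh
      push_neg at hh
      have := hdown (s - m) s hs
      have heq : s - (s - m) = m := by omega
      rw [heq] at this
      exact hnot this
    have := Finset.card_le_card hsub
    rw [Finset.card_range] at this
    omega

variable {t1 : ℕ} (ht1 : 0 < t1)

lemma uniq_rep {r r' j j' : ℕ} (hr : r < t1) (hr' : r' < t1)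
    (heq : r + j * t1 = r' + j' * t1) : r = r' ∧ j = j' := by
  have h1 : (r + j * t1) % t1 = r := by
    rw [Nat.add_mul_mod_self_right, Nat.mod_eq_of_lt hr]
  have h2 : (r' + j' * t1) % t1 = r' := by
    rw [Nat.add_mul_mod_self_right, Nat.mod_eq_of_lt hr']
  have hrr : r = r' := by rw [← h1, ← h2, heq]
  subst hrr
  have : j * t1 = j' * t1 := by omega
  have ht1' : t1 ≠ 0 := by omega
  exact ⟨rfl, Nat.eq_of_mul_eq_mul_right (by omega) this⟩

def cOf (B : Finset ℕ) : Fin t1 → ℕ := fun r => (B.filter (fun x => x % t1 = r.val)).card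

def BOf (c : Fin t1 → ℕ) : Finset ℕ :=
  Finset.biUnion Finset.univ (fun r : Fin t1 => (Finset.range (c r)).image (fun j => r.val + j * t1))

lemma mem_BOf {c : Fin t1 → ℕ} {x : ℕ} :
    x ∈ BOf c ↔ ∃ (r : Fin t1) (j : ℕ), j < c r ∧ x = r.val + j * t1 := by
  simp only [BOf, Finset.mem_biUnion, Finset.mem_univ, true_and, Finset.mem_image,
    Finset.mem_range]
  constructor
  · rintro ⟨r, j, hj, rfl⟩; exact ⟨r, j, hj, rfl⟩
  · rintro ⟨r, j, hj, rfl⟩; exact ⟨r, j, hj, rfl⟩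

lemma closed_BOf (c : Fin t1 → ℕ) : Closed t1 (BOf c) := by
  intro b hb hle
  rw [mem_BOf] at hb ⊢
  obtain ⟨r, j, hj, rfl⟩ := hb
  have hr := r.isLt
  have hj1 : 1 ≤ j := by
    by_contra hh
    push_neg at hh
    interval_cases j
    · simp at hle; omega
  obtain ⟨j', rfl⟩ : ∃ j', j = j' + 1 := ⟨j - 1, by omega⟩
  refine ⟨r, j', by omega, ?_⟩
  rw [Nat.succ_mul]
  omega

lemma zero_not_mem_BOf {c : Fin t1 → ℕ} (hc : c ⟨0, ht1⟩ = 0) : 0 ∉ BOf c := by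
  rw [mem_BOf]
  rintro ⟨r, j, hj, heq⟩
  have hr := r.isLt
  have hr0 : r.val = 0 := by
    rcases Nat.eq_zero_or_pos (j * t1) with hz | hp
    · omega
    · omega
  have hj0 : j = 0 := by
    have : j * t1 = 0 := by omega
    have : ¬ (0 < j) := by
      intro hh
      have := Nat.mul_le_mul hh ht1
      omega
    omega
  have : r = ⟨0, ht1⟩ := Fin.ext hr0
  rw [this] at hj
  omega

/-- structure of a `t1`-closed set within residue class `r` -/
lemma filter_eq_image {B : Finset ℕ} (h0 : 0 ∉ B) (cl : Closed t1 B) (r : Fin t1) :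
    B.filter (fun x => x % t1 = r.val) =
      (Finset.range (cOf B r)).image (fun j => r.val + j * t1) := by
  classical
  set F := B.filter (fun x => x % t1 = r.val) with hF
  set J := F.image (fun y => y / t1) with hJ
  have hinj : ∀ y₁ ∈ F, ∀ y₂ ∈ F, y₁ / t1 = y₂ / t1 → y₁ = y₂ := by
    intro y₁ h₁ y₂ h₂ hdiv
    rw [hF, Finset.mem_filter] at h₁ h₂
    have e₁ := Nat.div_add_mod y₁ t1
    have e₂ := Nat.div_add_mod y₂ t1
    have : t1 * (y₁ / t1) = t1 * (y₂ / t1) := by rw [hdiv]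
    omega
  have hcardJ : J.card = cOf B r := by
    rw [hJ, Finset.card_image_of_injOn]
    · rfl
    · intro a ha b hb hab
      exact hinj a ha b hb hab
  have hJdown : ∀ j, j + 1 ∈ J → j ∈ J := by
    intro j hj
    rw [hJ, Finset.mem_image] at hj
    obtain ⟨y, hy, hdiv⟩ := hj
    rw [hF, Finset.mem_filter] at hy
    have e := Nat.div_add_mod y t1
    rw [hdiv, hy.2] at e
    -- y = t1 * (j+1) + r
    have hyge : t1 ≤ y := by
      have : t1 * (j + 1) = t1 * j + t1 := by ring
      omega
    have hsub : y - t1 ∈ B := cl y hy.1 hyge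
    have hmul : t1 * (j + 1) = t1 * j + t1 := by ring
    have hyeq : y - t1 = t1 * j + r.val := by omega
    have hmod : (y - t1) % t1 = r.val := by
      rw [hyeq, Nat.mul_add_mod, Nat.mod_eq_of_lt r.isLt]
    have hdiv' : (y - t1) / t1 = j := by
      rw [hyeq, Nat.mul_add_div r.pos, Nat.div_eq_of_lt r.isLt]
      omega
    rw [hJ, Finset.mem_image]
    exact ⟨y - t1, by rw [hF, Finset.mem_filter]; exact ⟨hsub, hmod⟩, hdiv'⟩
  have hJrange : J = Finset.range (cOf B r) := by
    rw [← hcardJ]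
    exact initialSeg J hJdown
  ext y
  rw [Finset.mem_image]
  constructor
  · intro hy
    have hyJ : y / t1 ∈ J := by rw [hJ, Finset.mem_image]; exact ⟨y, hy, rfl⟩
    rw [hJrange, Finset.mem_range] at hyJ
    refine ⟨y / t1, Finset.mem_range.mpr hyJ, ?_⟩
    have e := Nat.div_add_mod y t1
    rw [hF, Finset.mem_filter] at hy
    have : t1 * (y / t1) = (y / t1) * t1 := by ring
    omega
  · rintro ⟨j, hj, rfl⟩
    rw [Finset.mem_range] at hj
    have hjJ : j ∈ J := by rw [hJrange, Finset.mem_range]; exact hj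
    rw [hJ, Finset.mem_image] at hjJ
    obtain ⟨y, hy, hdiv⟩ := hjJ
    have hy' := hy
    rw [hF, Finset.mem_filter] at hy'
    have e := Nat.div_add_mod y t1
    rw [hdiv, hy'.2] at e
    have : r.val + j * t1 = y := by
      have : t1 * j = j * t1 := by ring
      omega
    rw [hF] at hy
    rw [this]
    exact hy

lemma BOf_cOf {B : Finset ℕ} (ht1 : 0 < t1) (h0 : 0 ∉ B) (cl : Closed t1 B) :
    BOf (cOf (t1 := t1) B) = B := by
  ext x
  rw [mem_BOf]
  constructor
  · rintro ⟨r, j, hj, rfl⟩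
    have : r.val + j * t1 ∈ (Finset.range (cOf B r)).image (fun j => r.val + j * t1) :=
      Finset.mem_image.mpr ⟨j, Finset.mem_range.mpr hj, rfl⟩
    rw [← filter_eq_image h0 cl r] at this
    exact (Finset.mem_filter.mp this).1
  · intro hx
    set r : Fin t1 := ⟨x % t1, Nat.mod_lt x ht1⟩ with hr
    have hxf : x ∈ B.filter (fun y => y % t1 = r.val) :=
      Finset.mem_filter.mpr ⟨hx, rfl⟩
    rw [filter_eq_image h0 cl r, Finset.mem_image] at hxf
    obtain ⟨j, hj, heq⟩ := hxf
    exact ⟨r, j, Finset.mem_range.mp hj, heq.symm⟩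

lemma filter_BOf (c : Fin t1 → ℕ) (r : Fin t1) :
    (BOf c).filter (fun x => x % t1 = r.val) =
      (Finset.range (c r)).image (fun j => r.val + j * t1) := by
  ext x
  rw [Finset.mem_filter, mem_BOf, Finset.mem_image]
  constructor
  · rintro ⟨⟨r', j, hj, rfl⟩, hmod⟩
    have : (r'.val + j * t1) % t1 = r'.val := by
      rw [Nat.add_mul_mod_self_right, Nat.mod_eq_of_lt r'.isLt]
    have hrr : r' = r := Fin.ext (by rw [← this, hmod])
    subst hrr
    exact ⟨j, Finset.mem_range.mpr hj, rfl⟩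
  · rintro ⟨j, hj, rfl⟩
    rw [Finset.mem_range] at hj
    refine ⟨⟨r, j, hj, rfl⟩, ?_⟩
    rw [Nat.add_mul_mod_self_right, Nat.mod_eq_of_lt r.isLt]

lemma cOf_BOf (c : Fin t1 → ℕ) : cOf (BOf c) = c := by
  funext r
  have h1 : cOf (BOf c) r = ((BOf c).filter (fun x => x % t1 = r.val)).card := rfl
  rw [h1, filter_BOf c r, Finset.card_image_of_injOn, Finset.card_range]
  intro a _ b _ hab
  have hab' : r.val + a * t1 = r.val + b * t1 := hab
  have : a * t1 = b * t1 := by omega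
  exact Nat.eq_of_mul_eq_mul_right r.pos this

lemma cOf_zero {B : Finset ℕ} (ht1 : 0 < t1) (h0 : 0 ∉ B) (cl : Closed t1 B) :
    cOf B ⟨0, ht1⟩ = 0 := by
  have : B.filter (fun x => x % t1 = (0:ℕ)) = ∅ := by
    rw [Finset.eq_empty_iff_forall_notMem]
    intro y hy
    rw [Finset.mem_filter] at hy
    have e := Nat.div_add_mod y t1
    rw [hy.2] at e
    have hle : t1 * (y / t1) ≤ y := by omega
    have := closed_sub_mul cl (y / t1) hy.1 hle
    have heq : y - t1 * (y / t1) = 0 := by omega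
    rw [heq] at this
    exact h0 this
  have h2 : cOf B ⟨0, ht1⟩ = (B.filter (fun x => x % t1 = (0:ℕ))).card := rfl
  rw [h2, this, Finset.card_empty]

lemma mem_BOf_iff_lt {c : Fin t1 → ℕ} {r j : ℕ} (hr : r < t1) :
    r + j * t1 ∈ BOf c ↔ j < c ⟨r, hr⟩ := by
  rw [mem_BOf]
  constructor
  · rintro ⟨r', j', hj', heq⟩
    obtain ⟨h1, h2⟩ := uniq_rep (t1 := t1) hr r'.isLt heq
    subst h2
    have : (⟨r, hr⟩ : Fin t1) = r' := Fin.ext h1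
    rw [this]
    exact hj'
  · intro hj
    exact ⟨⟨r, hr⟩, j, hj, rfl⟩

noncomputable def abacusEquiv (ht1 : 0 < t1) {t2 : ℕ} :
    {B : Finset ℕ // 0 ∉ B ∧ Closed t1 B ∧ Closed t2 B} ≃
      {c : Fin t1 → ℕ // c ⟨0, ht1⟩ = 0 ∧ Closed t2 (BOf c)} where
  toFun B := ⟨cOf B.1, cOf_zero ht1 B.2.1 B.2.2.1, by
    rw [BOf_cOf ht1 B.2.1 B.2.2.1]; exact B.2.2.2⟩
  invFun c := ⟨BOf c.1, zero_not_mem_BOf ht1 c.2.1, closed_BOf c.1, c.2.2⟩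
  left_inv B := Subtype.ext (BOf_cOf ht1 B.2.1 B.2.2.1)
  right_inv c := Subtype.ext (cOf_BOf c.1)

end Abacus

section Layer2

variable {t1 t2 : ℕ}

/-- reduction of `Closed t2` to the top element of each residue class -/
lemma closed_top_iff (ht2 : 0 < t2) {c : Fin t1 → ℕ} :
    Closed t2 (BOf c) ↔ ∀ r : Fin t1, 0 < c r → t2 ≤ r.val + (c r - 1) * t1 →
      (r.val + (c r - 1) * t1 - t2) ∈ BOf c := by
  constructor
  · intro cl r hcr hle
    apply cl
    · exact (mem_BOf_iff_lt r.isLt).mpr (by simp only [Fin.eta]; omega)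
    · exact hle
  · intro htop b hb hle
    rw [mem_BOf] at hb
    obtain ⟨r, j, hj, rfl⟩ := hb
    set l := c r - 1 - j with hl
    have hml : (c r - 1) * t1 = j * t1 + l * t1 := by
      rw [← Nat.add_mul]
      congr 1
      omega
    have htople : t2 ≤ r.val + (c r - 1) * t1 := by omega
    have hmem := htop r (by omega) htople
    have hsub := closed_sub_mul (closed_BOf c) l hmem (by
      have : t1 * l = l * t1 := by ring
      omega)
    have heq : r.val + (c r - 1) * t1 - t2 - t1 * l = r.val + j * t1 - t2 := by
      have : t1 * l = l * t1 := by ring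
      omega
    rwa [heq] at hsub

def resid (t1 t2 : ℕ) (ht1 : 0 < t1) (m : ℕ) : Fin t1 := ⟨(m * t2) % t1, Nat.mod_lt _ ht1⟩

def nu (t1 t2 : ℕ) (ht1 : 0 < t1) (c : Fin t1 → ℕ) (m : ℕ) : ℕ := c (resid t1 t2 ht1 m)

def qf (t1 t2 m : ℕ) : ℕ := (m * t2) / t1

variable (ht1 : 0 < t1)

/-- per-class translation of the top condition into an inequality -/
lemma class_cond_iff (c : Fin t1 → ℕ) {m : ℕ} (hm : 1 ≤ m) :
    (0 < c (resid t1 t2 ht1 m) → t2 ≤ (resid t1 t2 ht1 m).val + (c (resid t1 t2 ht1 m) - 1) * t1 →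
      ((resid t1 t2 ht1 m).val + (c (resid t1 t2 ht1 m) - 1) * t1 - t2) ∈ BOf c) ↔
    nu t1 t2 ht1 c m ≤ nu t1 t2 ht1 c (m - 1) + (qf t1 t2 m - qf t1 t2 (m - 1)) := by
  have hresid : (resid t1 t2 ht1 m).val = (m * t2) % t1 := rfl
  set a := c (resid t1 t2 ht1 m) with ha
  set b := c (resid t1 t2 ht1 (m - 1)) with hb'
  set r := (m * t2) % t1 with hr
  set q := (m * t2) / t1 with hq
  set r' := ((m - 1) * t2) % t1 with hr'
  set q' := ((m - 1) * t2) / t1 with hq'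
  have hrlt : r < t1 := Nat.mod_lt _ ht1
  have hrlt' : r' < t1 := Nat.mod_lt _ ht1
  have e1 : t1 * q + r = m * t2 := Nat.div_add_mod _ _
  have e2 : t1 * q' + r' = (m - 1) * t2 := Nat.div_add_mod _ _
  have estep : (m - 1) * t2 + t2 = m * t2 := by
    conv_rhs => rw [show m = m - 1 + 1 by omega]
    rw [Nat.succ_mul]
  have hqq : q' ≤ q := Nat.div_le_div_right (by omega)
  set d := q - q' with hd
  have hkey : t1 * d + r = r' + t2 := by
    have h1 : t1 * q = t1 * q' + t1 * d := by
      rw [hd, ← Nat.mul_add]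
      congr 1
      omega
    omega
  have hcomm : t1 * d = d * t1 := Nat.mul_comm _ _
  have hsub1 : (a - 1) * t1 = a * t1 - 1 * t1 := Nat.sub_mul a 1 t1
  have hone : 1 * t1 = t1 := Nat.one_mul t1
  have claimA : (0 < a ∧ t2 ≤ r + (a - 1) * t1) ↔ d + 1 ≤ a := by
    constructor
    · rintro ⟨hpos, hta⟩
      by_contra hh
      push_neg at hh
      have hmono : a * t1 ≤ d * t1 := Nat.mul_le_mul_right t1 (by omega)
      have hat : 1 * t1 ≤ a * t1 := Nat.mul_le_mul_right t1 (by omega)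
      omega
    · intro hda
      have h1 : d * t1 ≤ (a - 1) * t1 := Nat.mul_le_mul_right t1 (by omega)
      constructor
      · omega
      · omega
  have hBclaim : d + 1 ≤ a → (r + (a - 1) * t1 - t2 = r' + (a - 1 - d) * t1) := by
    intro hda
    have hE : (a - 1 - d) * t1 = (a - 1) * t1 - d * t1 := Nat.sub_mul _ _ _
    have h1 : d * t1 ≤ (a - 1) * t1 := Nat.mul_le_mul_right t1 (by omega)
    omega
  show _ ↔ a ≤ b + (q - q')
  constructor
  · intro hcond
    by_cases hda : d + 1 ≤ a
    · have h0 := claimA.mpr hda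
      have hmem := hcond h0.1 (by rw [hresid]; exact h0.2)
      rw [hresid] at hmem
      rw [hBclaim hda, mem_BOf_iff_lt hrlt'] at hmem
      have hbb : c ⟨r', hrlt'⟩ = b := by
        rw [hb']
        congr 1
      omega
    · omega
  · intro hineq hpos hta
    rw [hresid] at hta ⊢
    have hda := claimA.mp ⟨hpos, hta⟩
    rw [hBclaim hda, mem_BOf_iff_lt hrlt']
    have hbb : c ⟨r', hrlt'⟩ = b := by
      rw [hb']
      congr 1
    omega

lemma resid_injective (h : Nat.Coprime t1 t2) :
    Function.Injective (fun m : Fin t1 => resid t1 t2 ht1 m.val) := by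
  intro m m' heq
  simp only [resid, Fin.mk.injEq] at heq
  have hmod : (m.val * t2) % t1 = (m'.val * t2) % t1 := heq
  have hmm : m.val ≡ m'.val [MOD t1] := by
    have hc : Nat.Coprime t2 t1 := h.symm
    exact (Nat.ModEq.cancel_right_of_coprime (by rw [Nat.Coprime] at hc; omega) hmod)
  rw [Nat.ModEq, Nat.mod_eq_of_lt m.isLt, Nat.mod_eq_of_lt m'.isLt] at hmm
  exact Fin.ext hmm

lemma resid_surjective (h : Nat.Coprime t1 t2) (r : Fin t1) :
    ∃ m : ℕ, m < t1 ∧ resid t1 t2 ht1 m = r := by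
  have hsurj := Finite.surjective_of_injective (resid_injective ht1 h)
  obtain ⟨m, hm⟩ := hsurj r
  exact ⟨m.val, m.isLt, hm⟩

lemma resid_zero : resid t1 t2 ht1 0 = ⟨0, ht1⟩ := by
  simp [resid]

/-- Layer 2 main : Closed t2 on the abacus is the cyclic inequality system -/
lemma closed2_iff (ht2 : 0 < t2) (h : Nat.Coprime t1 t2) {c : Fin t1 → ℕ}
    (hc0 : c ⟨0, ht1⟩ = 0) :
    Closed t2 (BOf c) ↔ ∀ m : ℕ, 1 ≤ m → m < t1 →
      nu t1 t2 ht1 c m ≤ nu t1 t2 ht1 c (m - 1) + (qf t1 t2 m - qf t1 t2 (m - 1)) := by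
  rw [closed_top_iff ht2]
  constructor
  · intro hcond m hm hmt
    rw [← class_cond_iff ht1 c hm]
    exact hcond (resid t1 t2 ht1 m)
  · intro hineq r
    obtain ⟨m, hmlt, rfl⟩ := resid_surjective ht1 h r
    rcases Nat.eq_zero_or_pos m with hz | hp
    · subst hz
      rw [resid_zero, hc0]
      omega
    · rw [class_cond_iff ht1 c hp]
      exact hineq m hp hmlt

end Layer2

section Layer3

variable {t1 t2 : ℕ}

def NuCond (t1 t2 : ℕ) (ν : Fin t1 → ℕ) : Prop :=
  ∀ (m : ℕ) (h1 : 1 ≤ m) (h2 : m < t1),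
    ν ⟨m, h2⟩ ≤ ν ⟨m - 1, by omega⟩ + (qf t1 t2 m - qf t1 t2 (m - 1))

def DCond (t1 t2 : ℕ) (D : Fin t1 → ℕ) : Prop :=
  (∀ m m' : Fin t1, m ≤ m' → D m ≤ D m') ∧ ∀ m : Fin t1, t1 * D m ≤ t2 * m.val

variable (ht1 : 0 < t1)

def residFin : Fin t1 → Fin t1 := fun m => resid t1 t2 ht1 m.val

noncomputable def nuEquiv (h : Nat.Coprime t1 t2) (ht2 : 0 < t2) :
    {c : Fin t1 → ℕ // c ⟨0, ht1⟩ = 0 ∧ Closed t2 (BOf c)} ≃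
      {ν : Fin t1 → ℕ // ν ⟨0, ht1⟩ = 0 ∧ NuCond t1 t2 ν} := by
  have hbij : Function.Bijective (residFin (t2 := t2) ht1) :=
    ⟨resid_injective ht1 h, Finite.surjective_of_injective (resid_injective ht1 h)⟩
  let eRes : Fin t1 ≃ Fin t1 := Equiv.ofBijective _ hbij
  have heRes : ∀ m, eRes m = residFin (t2 := t2) ht1 m := fun m => rfl
  have heRes0 : eRes ⟨0, ht1⟩ = ⟨0, ht1⟩ := by
    rw [heRes]
    exact resid_zero ht1
  have heRes0' : eRes.symm ⟨0, ht1⟩ = ⟨0, ht1⟩ := by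
    rw [Equiv.symm_apply_eq]
    exact heRes0.symm
  refine
    { toFun := fun c => ⟨c.1 ∘ eRes, ?_, ?_⟩
      invFun := fun ν => ⟨ν.1 ∘ eRes.symm, ?_, ?_⟩
      left_inv := ?_
      right_inv := ?_ }
  · show c.1 (eRes ⟨0, ht1⟩) = 0
    rw [heRes0]
    exact c.2.1
  · -- NuCond of c ∘ eRes
    intro m h1 h2
    have := (closed2_iff ht1 ht2 h c.2.1).mp c.2.2 m h1 h2
    exact this
  · show ν.1 (eRes.symm ⟨0, ht1⟩) = 0
    rw [heRes0']
    exact ν.2.1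
  · -- Closed t2 (BOf (ν ∘ eRes.symm))
    have hc0 : (ν.1 ∘ eRes.symm) ⟨0, ht1⟩ = 0 := by
      show ν.1 (eRes.symm ⟨0, ht1⟩) = 0
      rw [heRes0']
      exact ν.2.1
    rw [closed2_iff ht1 ht2 h hc0]
    intro m h1 h2
    have hnu : ∀ (j : ℕ) (hj : j < t1),
        nu t1 t2 ht1 (ν.1 ∘ eRes.symm) j = ν.1 ⟨j, hj⟩ := by
      intro j hj
      show ν.1 (eRes.symm (resid t1 t2 ht1 j)) = ν.1 ⟨j, hj⟩
      congr 1
      have : resid t1 t2 ht1 j = eRes ⟨j, hj⟩ := rfl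
      rw [this, Equiv.symm_apply_apply]
    rw [hnu m h2, hnu (m-1) (by omega)]
    exact ν.2.2 m h1 h2
  · intro c
    apply Subtype.ext
    funext r
    show c.1 (eRes (eRes.symm r)) = c.1 r
    rw [Equiv.apply_symm_apply]
  · intro ν
    apply Subtype.ext
    funext r
    show ν.1 (eRes.symm (eRes r)) = ν.1 r
    rw [Equiv.symm_apply_apply]

lemma qf_mono {m m' : ℕ} (hm : m ≤ m') : qf t1 t2 m ≤ qf t1 t2 m' :=
  Nat.div_le_div_right (Nat.mul_le_mul_right t2 hm)

lemma nu_le_qf {ν : Fin t1 → ℕ} (h0 : ν ⟨0, ht1⟩ = 0) (hN : NuCond t1 t2 ν) :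
    ∀ (j : ℕ) (hj : j < t1), ν ⟨j, hj⟩ ≤ qf t1 t2 j := by
  intro j
  induction j with
  | zero => intro hj; rw [(by rfl : (⟨0, hj⟩ : Fin t1) = ⟨0, ht1⟩), h0]; omega
  | succ j ih =>
    intro hj
    have hcond := hN (j + 1) (by omega) hj
    have hidx : (⟨j + 1 - 1, by omega⟩ : Fin t1) = ⟨j, by omega⟩ := by
      apply Fin.ext; simp
    rw [hidx] at hcond
    have hih := ih (by omega)
    have hmono : qf t1 t2 j ≤ qf t1 t2 (j + 1) := qf_mono (by omega)
    have hstep : qf t1 t2 (j + 1 - 1) = qf t1 t2 j := by norm_num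
    rw [hstep] at hcond
    omega

lemma fin_mono_of_adjacent {k : ℕ} (f : Fin k → ℕ)
    (hadj : ∀ (j : ℕ) (h : j + 1 < k), f ⟨j, by omega⟩ ≤ f ⟨j + 1, h⟩) :
    ∀ m m' : Fin k, m ≤ m' → f m ≤ f m' := by
  have claim : ∀ (d j : ℕ) (h : j + d < k), f ⟨j, by omega⟩ ≤ f ⟨j + d, h⟩ := by
    intro d
    induction d with
    | zero => intro j h; exact le_refl _
    | succ d ih =>
      intro j h
      have h1 := ih j (by omega)
      have h2 := hadj (j + d) (by omega)
      have hidx : (⟨j + d + 1, by omega⟩ : Fin k) = ⟨j + (d + 1), by omega⟩ := by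
        apply Fin.ext; simp; omega
      rw [hidx] at h2
      exact le_trans h1 h2
  intro m m' hle
  have := claim (m'.val - m.val) m.val (by omega)
  have hidx : (⟨m.val + (m'.val - m.val), by omega⟩ : Fin k) = m' := by
    apply Fin.ext
    simp
    omega
  rw [hidx] at this
  have hidx2 : (⟨m.val, by omega⟩ : Fin k) = m := Fin.eta m _
  rwa [hidx2] at this

lemma qf_zero : qf t1 t2 0 = 0 := by simp [qf]

lemma t1_mul_qf_le (m : ℕ) : t1 * qf t1 t2 m ≤ m * t2 := by
  have h := Nat.div_mul_le_self (m * t2) t1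
  have hc : m * t2 / t1 * t1 = t1 * (m * t2 / t1) := Nat.mul_comm _ _
  show t1 * (m * t2 / t1) ≤ m * t2
  omega

lemma D_le_qf (ht1 : 0 < t1) {D : Fin t1 → ℕ} (hD : DCond t1 t2 D) (m : Fin t1) :
    D m ≤ qf t1 t2 m.val := by
  have h1 := hD.2 m
  rw [qf]
  rw [Nat.le_div_iff_mul_le ht1]
  have hc1 : D m * t1 = t1 * D m := Nat.mul_comm _ _
  have hc2 : m.val * t2 = t2 * m.val := Nat.mul_comm _ _
  omega

noncomputable def dEquiv :
    {ν : Fin t1 → ℕ // ν ⟨0, ht1⟩ = 0 ∧ NuCond t1 t2 ν} ≃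
      {D : Fin t1 → ℕ // DCond t1 t2 D} := by
  refine
    { toFun := fun ν => ⟨fun m => qf t1 t2 m.val - ν.1 m, ?_, ?_⟩
      invFun := fun D => ⟨fun m => qf t1 t2 m.val - D.1 m, ?_, ?_⟩
      left_inv := ?_
      right_inv := ?_ }
  · -- monotone
    refine @fin_mono_of_adjacent t1 t1 _ ?_
    intro j h
    have hcond := ν.2.2 (j + 1) (by omega) h
    have hidx : (⟨j + 1 - 1, by omega⟩ : Fin t1) = ⟨j, by omega⟩ := by
      apply Fin.ext; simp
    rw [hidx] at hcond
    have hstep : qf t1 t2 (j + 1 - 1) = qf t1 t2 j := by norm_num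
    rw [hstep] at hcond
    have h1 := nu_le_qf ht1 ν.2.1 ν.2.2 j (by omega)
    have h2 := nu_le_qf ht1 ν.2.1 ν.2.2 (j+1) h
    have h3 : qf t1 t2 j ≤ qf t1 t2 (j + 1) := qf_mono (by omega)
    simp only [Fin.val_mk]
    omega
  · -- bound
    intro m
    have hν := nu_le_qf ht1 ν.2.1 ν.2.2 m.val m.isLt
    have hm : (⟨m.val, m.isLt⟩ : Fin t1) = m := Fin.eta m _
    rw [hm] at hν
    have hsplit : (qf t1 t2 m.val - ν.1 m) + ν.1 m = qf t1 t2 m.val := by omega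
    have hexp : t1 * qf t1 t2 m.val = t1 * (qf t1 t2 m.val - ν.1 m) + t1 * ν.1 m := by
      rw [← Nat.mul_add, hsplit]
    have hq := t1_mul_qf_le (t1 := t1) (t2 := t2) m.val
    have hc : m.val * t2 = t2 * m.val := Nat.mul_comm _ _
    show t1 * (qf t1 t2 m.val - ν.1 m) ≤ t2 * m.val
    omega
  · -- ν 0 = 0 for inverse
    show qf t1 t2 0 - D.1 ⟨0, ht1⟩ = 0
    rw [qf_zero]
    omega
  · -- NuCond for inverse
    intro m h1 h2
    have hmono := D.2.1 ⟨m - 1, by omega⟩ ⟨m, h2⟩ (by simp only [Fin.mk_le_mk]; omega)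
    have hle1 := D_le_qf ht1 D.2 ⟨m, h2⟩
    have hle2 := D_le_qf ht1 D.2 ⟨m - 1, by omega⟩
    have h3 : qf t1 t2 (m - 1) ≤ qf t1 t2 m := qf_mono (by omega)
    simp only [Fin.val_mk] at hmono hle1 hle2 ⊢
    omega
  · intro ν
    apply Subtype.ext
    funext m
    have hν := nu_le_qf ht1 ν.2.1 ν.2.2 m.val m.isLt
    have hm : (⟨m.val, m.isLt⟩ : Fin t1) = m := Fin.eta m _
    rw [hm] at hν
    show qf t1 t2 m.val - (qf t1 t2 m.val - ν.1 m) = ν.1 m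
    omega
  · intro D
    apply Subtype.ext
    funext m
    have hle := D_le_qf ht1 D.2 m
    show qf t1 t2 m.val - (qf t1 t2 m.val - D.1 m) = D.1 m
    omega

end Layer3

section Layer4

variable {t1 t2 : ℕ}

def Good (t1 t2 : ℕ) (T : Finset (ZMod (t1 + t2))) : Prop :=
  ∀ x : ℕ, 0 < x → x < t1 + t2 → t1 * x ≤ (t1 + t2) * (T.filter (fun y => y.val < x)).card

lemma fin_strict_ge {k : ℕ} {f : Fin k → ℕ} (hf : StrictMono f) :
    ∀ (j : ℕ) (h : j < k), j ≤ f ⟨j, h⟩ := by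
  intro j
  induction j with
  | zero => intro h; omega
  | succ j ih =>
    intro h
    have h1 := ih (by omega)
    have h2 : f ⟨j, by omega⟩ < f ⟨j + 1, h⟩ := hf (by simp only [Fin.mk_lt_mk]; omega)
    omega

lemma fin_strict_gap {k : ℕ} {f : Fin k → ℕ} (hf : StrictMono f) :
    ∀ (d j : ℕ) (h : j + d < k), f ⟨j, by omega⟩ + d ≤ f ⟨j + d, h⟩ := by
  intro d
  induction d with
  | zero =>
    intro j h
    have : f ⟨j, by omega⟩ = f ⟨j + 0, h⟩ := congrArg f (Fin.ext (by simp))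
    omega
  | succ d ih =>
    intro j h
    have h1 := ih j (by omega)
    have h2 : f ⟨j + d, by omega⟩ < f ⟨j + d + 1, by omega⟩ :=
      hf (by simp only [Fin.mk_lt_mk]; omega)
    have hidx : (⟨j + d + 1, by omega⟩ : Fin k) = ⟨j + (d + 1), by omega⟩ := by
      apply Fin.ext; simp only [Fin.val_mk]; omega
    rw [hidx] at h2
    omega

lemma qf_lt_t2 (ht1 : 0 < t1) (ht2 : 0 < t2) (m : Fin t1) : qf t1 t2 m.val < t2 := by
  have h1 := t1_mul_qf_le (t1 := t1) (t2 := t2) m.val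
  have h2 : m.val * t2 ≤ (t1 - 1) * t2 := Nat.mul_le_mul_right t2 (by have := m.isLt; omega)
  have h3 : (t1 - 1) * t2 = t1 * t2 - 1 * t2 := Nat.sub_mul _ _ _
  have h5 : 1 * t2 ≤ t1 * t2 := Nat.mul_le_mul_right t2 ht1
  have hone : 1 * t2 = t2 := Nat.one_mul t2
  have h4 : t1 * qf t1 t2 m.val < t1 * t2 := by omega
  exact Nat.lt_of_mul_lt_mul_left h4

lemma D_add_lt (ht1 : 0 < t1) (ht2 : 0 < t2) {D : Fin t1 → ℕ} (hD : DCond t1 t2 D) (m : Fin t1) :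
    D m + m.val < t1 + t2 := by
  have h1 := D_le_qf ht1 hD m
  have h2 := qf_lt_t2 ht1 ht2 (t2 := t2) m
  have h3 := m.isLt
  omega

def fD (D : Fin t1 → ℕ) : Finset (ZMod (t1 + t2)) :=
  Finset.image (fun m : Fin t1 => ((D m + m.val : ℕ) : ZMod (t1 + t2))) Finset.univ

lemma fD_injOn (ht1 : 0 < t1) (ht2 : 0 < t2) {D : Fin t1 → ℕ} (hD : DCond t1 t2 D) :
    Function.Injective (fun m : Fin t1 => ((D m + m.val : ℕ) : ZMod (t1 + t2))) := by
  haveI : NeZero (t1 + t2) := ⟨by omega⟩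
  intro m m' heq
  simp only at heq
  have hv : ((D m + m.val : ℕ) : ZMod (t1 + t2)).val = D m + m.val :=
    ZMod.val_cast_of_lt (D_add_lt ht1 ht2 hD m)
  have hv' : ((D m' + m'.val : ℕ) : ZMod (t1 + t2)).val = D m' + m'.val :=
    ZMod.val_cast_of_lt (D_add_lt ht1 ht2 hD m')
  have heqv : D m + m.val = D m' + m'.val := by rw [← hv, ← hv', heq]
  by_contra hne
  rcases Ne.lt_or_gt (fun hc : m = m' => hne hc) with hlt | hlt
  · have := hD.1 m m' (le_of_lt hlt)
    have hval : m.val < m'.val := hlt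
    omega
  · have := hD.1 m' m (le_of_lt hlt)
    have hval : m'.val < m.val := hlt
    omega

lemma fD_card (ht1 : 0 < t1) (ht2 : 0 < t2) {D : Fin t1 → ℕ} (hD : DCond t1 t2 D) :
    (fD (t2 := t2) D).card = t1 := by
  rw [fD, Finset.card_image_of_injective _ (fD_injOn ht1 ht2 hD), Finset.card_univ,
    Fintype.card_fin]

lemma fD_filter_card (ht1 : 0 < t1) (ht2 : 0 < t2) {D : Fin t1 → ℕ} (hD : DCond t1 t2 D) (x : ℕ) :
    ((fD (t2 := t2) D).filter (fun y => y.val < x)).card =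
      (Finset.univ.filter (fun m : Fin t1 => D m + m.val < x)).card := by
  haveI : NeZero (t1 + t2) := ⟨by omega⟩
  rw [fD, Finset.filter_image, Finset.card_image_of_injective _ (fD_injOn ht1 ht2 hD)]
  congr 1
  apply Finset.filter_congr
  intro m _
  rw [ZMod.val_cast_of_lt (D_add_lt ht1 ht2 hD m)]

lemma fD_initial {D : Fin t1 → ℕ} (hD : DCond t1 t2 D) (x a : ℕ)
    (ha : a = (Finset.univ.filter (fun m : Fin t1 => D m + m.val < x)).card)
    (hcard : a < t1) : x ≤ D ⟨a, hcard⟩ + a := by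
  classical
  set S := Finset.univ.filter (fun m : Fin t1 => D m + m.val < x) with hS
  set S' := S.image Fin.val with hS'
  have hcards : S'.card = S.card :=
    Finset.card_image_of_injective _ Fin.val_injective
  have hdown : ∀ j, j + 1 ∈ S' → j ∈ S' := by
    intro j hj
    rw [hS', Finset.mem_image] at hj
    obtain ⟨m, hm, hval⟩ := hj
    rw [hS, Finset.mem_filter] at hm
    have hjlt : j < t1 := by have := m.isLt; omega
    have hmono := hD.1 ⟨j, hjlt⟩ m (by rw [← Fin.eta m m.isLt, Fin.mk_le_mk]; omega)
    rw [hS', Finset.mem_image]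
    refine ⟨⟨j, hjlt⟩, ?_, rfl⟩
    rw [hS, Finset.mem_filter]
    exact ⟨Finset.mem_univ _, by simp only [Fin.val_mk]; omega⟩
  have hrange : S' = Finset.range S'.card := initialSeg S' hdown
  by_contra hh
  push_neg at hh
  have hmemS : (⟨a, hcard⟩ : Fin t1) ∈ S :=
    Finset.mem_filter.mpr ⟨Finset.mem_univ _, by simp only [Fin.val_mk]; omega⟩
  have hmemS' : a ∈ S' := by
    rw [hS', Finset.mem_image]
    exact ⟨_, hmemS, rfl⟩
  rw [hrange, Finset.mem_range, hcards, ← ha] at hmemS'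
  omega

lemma fD_good (ht1 : 0 < t1) (ht2 : 0 < t2) {D : Fin t1 → ℕ} (hD : DCond t1 t2 D) :
    Good t1 t2 (fD (t2 := t2) D) := by
  intro x hx hxn
  rw [fD_filter_card ht1 ht2 hD x]
  set a := (Finset.univ.filter (fun m : Fin t1 => D m + m.val < x)).card with ha
  rcases Nat.lt_or_ge a t1 with hlt | hge
  · have hini := fD_initial hD x a ha hlt
    have hmul : t1 * x ≤ t1 * (D ⟨a, hlt⟩ + a) := Nat.mul_le_mul_left t1 hini
    have hexp : t1 * (D ⟨a, hlt⟩ + a) = t1 * D ⟨a, hlt⟩ + t1 * a := Nat.mul_add _ _ _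
    have hbound := hD.2 ⟨a, hlt⟩
    simp only [Fin.val_mk] at hbound
    have hexp2 : (t1 + t2) * a = t1 * a + t2 * a := Nat.add_mul _ _ _
    omega
  · have hle : a ≤ t1 := by
      have : a ≤ Finset.univ.card := Finset.card_filter_le _ _
      rwa [Finset.card_univ, Fintype.card_fin] at this
    have haeq : a = t1 := by omega
    have h1 : t1 * x ≤ t1 * (t1 + t2) := Nat.mul_le_mul_left t1 (by omega)
    have h2 : t1 * (t1 + t2) = (t1 + t2) * t1 := Nat.mul_comm _ _
    rw [haeq]
    omega

noncomputable def goodEquiv (ht1 : 0 < t1) (ht2 : 0 < t2) :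
    {D : Fin t1 → ℕ // DCond t1 t2 D} ≃
      {T : Finset (ZMod (t1 + t2)) // T.card = t1 ∧ Good t1 t2 T} := by
  haveI : NeZero (t1 + t2) := ⟨by omega⟩
  refine Equiv.ofBijective
    (fun D => ⟨fD (t2 := t2) D.1, fD_card ht1 ht2 D.2, fD_good ht1 ht2 D.2⟩) ⟨?_, ?_⟩
  · -- injective
    intro D D' heq
    have heq' : fD (t2 := t2) D.1 = fD (t2 := t2) D'.1 := congrArg Subtype.val heq
    apply Subtype.ext
    -- compare ℕ images
    have hτmem : ∀ m : Fin t1, D.1 m + m.val ∈ (fD (t2 := t2) D.1).image ZMod.val := by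
      intro m
      rw [Finset.mem_image]
      refine ⟨((D.1 m + m.val : ℕ) : ZMod (t1 + t2)), ?_, ZMod.val_cast_of_lt (D_add_lt ht1 ht2 D.2 m)⟩
      rw [fD, Finset.mem_image]
      exact ⟨m, Finset.mem_univ _, rfl⟩
    have hτmem' : ∀ m : Fin t1, D'.1 m + m.val ∈ (fD (t2 := t2) D.1).image ZMod.val := by
      intro m
      rw [heq', Finset.mem_image]
      refine ⟨((D'.1 m + m.val : ℕ) : ZMod (t1 + t2)), ?_, ZMod.val_cast_of_lt (D_add_lt ht1 ht2 D'.2 m)⟩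
      rw [fD, Finset.mem_image]
      exact ⟨m, Finset.mem_univ _, rfl⟩
    have hcardv : ((fD (t2 := t2) D.1).image ZMod.val).card = t1 := by
      rw [Finset.card_image_of_injective _ (ZMod.val_injective _), fD_card ht1 ht2 D.2]
    have hsm : StrictMono (fun m : Fin t1 => D.1 m + m.val) := by
      intro m m' hlt
      have := D.2.1 m m' (le_of_lt hlt)
      have hval : m.val < m'.val := hlt
      simp only
      omega
    have hsm' : StrictMono (fun m : Fin t1 => D'.1 m + m.val) := by
      intro m m' hlt
      have := D'.2.1 m m' (le_of_lt hlt)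
      have hval : m.val < m'.val := hlt
      simp only
      omega
    have hu := Finset.orderEmbOfFin_unique hcardv hτmem hsm
    have hu' := Finset.orderEmbOfFin_unique hcardv hτmem' hsm'
    funext m
    have : D.1 m + m.val = D'.1 m + m.val := by
      rw [congrFun hu m, congrFun hu' m]
    omega
  · -- surjective
    rintro ⟨T, hcard, hgood⟩
    classical
    have hcv : (T.image ZMod.val).card = t1 := by
      rw [Finset.card_image_of_injective _ (ZMod.val_injective _), hcard]
    set τ : Fin t1 ↪o ℕ := (T.image ZMod.val).orderEmbOfFin hcv with hτdef
    have hτs : StrictMono ⇑τ := τ.strictMono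
    have hτmem : ∀ m : Fin t1, τ m ∈ T.image ZMod.val :=
      fun m => Finset.orderEmbOfFin_mem _ hcv m
    have hτmem' : ∀ m : Fin t1, ∃ y ∈ T, ZMod.val y = τ m := by
      intro m
      have h0 := hτmem m
      rwa [Finset.mem_image] at h0
    have hτlt : ∀ m : Fin t1, τ m < t1 + t2 := by
      intro m
      obtain ⟨y, _, hy⟩ := hτmem' m
      calc τ m = y.val := hy.symm
        _ < t1 + t2 := ZMod.val_lt y
    have hτge : ∀ m : Fin t1, m.val ≤ τ m := by
      intro m
      have h0 := fin_strict_ge hτs m.val m.isLt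
      rwa [Fin.eta] at h0
    have hrange : ∀ v : ℕ, v ∈ T.image ZMod.val → ∃ m : Fin t1, τ m = v := by
      intro v hv
      have h0 := Finset.range_orderEmbOfFin (T.image ZMod.val) hcv
      have hv' : v ∈ Set.range ((T.image ZMod.val).orderEmbOfFin hcv) := by
        rw [h0]
        exact hv
      exact hv'
    set D : Fin t1 → ℕ := fun m => τ m - m.val with hDdef
    have hτeq : ∀ m : Fin t1, D m + m.val = τ m := by
      intro m
      have h0 := hτge m
      show τ m - m.val + m.val = τ m
      omega
    have hfinlt : ∀ m : Fin t1,
        ((Finset.univ.filter (fun m' : Fin t1 => m' < m)).card = m.val) := by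
      intro m
      have himg : (Finset.univ.filter (fun m' : Fin t1 => m' < m)).image Fin.val =
          Finset.range m.val := by
        ext j
        rw [Finset.mem_image, Finset.mem_range]
        constructor
        · rintro ⟨m', hm', rfl⟩
          rw [Finset.mem_filter, Fin.lt_def] at hm'
          exact hm'.2
        · intro hj
          refine ⟨⟨j, by have := m.isLt; omega⟩, ?_, rfl⟩
          rw [Finset.mem_filter, Fin.lt_def]
          exact ⟨Finset.mem_univ _, by simp only [Fin.val_mk]; omega⟩
      have h0 := congrArg Finset.card himg
      rwa [Finset.card_image_of_injective _ Fin.val_injective, Finset.card_range] at h0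
    have hcount : ∀ m : Fin t1, (T.filter (fun y => y.val < τ m)).card = m.val := by
      intro m
      have h1 : T.filter (fun y => (ZMod.val y) < τ m) =
          ((T.image ZMod.val).filter (fun v => v < τ m)).image
            (fun v : ℕ => (v : ZMod (t1 + t2))) := by
        ext y
        constructor
        · intro hy
          obtain ⟨hyT, hylt⟩ := Finset.mem_filter.mp hy
          exact Finset.mem_image.mpr ⟨y.val,
            Finset.mem_filter.mpr ⟨Finset.mem_image.mpr ⟨y, hyT, rfl⟩, hylt⟩,
            ZMod.natCast_rightInverse y⟩
        · intro hy
          obtain ⟨v, hvf, hcast⟩ := Finset.mem_image.mp hy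
          obtain ⟨hvmem, hvlt⟩ := Finset.mem_filter.mp hvf
          obtain ⟨y', hy'T, hval⟩ := Finset.mem_image.mp hvmem
          subst hcast
          subst hval
          rw [ZMod.natCast_rightInverse y']
          exact Finset.mem_filter.mpr ⟨hy'T, hvlt⟩
      have h2 : (T.image ZMod.val).filter (fun v => v < τ m) =
          (Finset.univ.filter (fun m' : Fin t1 => m' < m)).image ⇑τ := by
        ext v
        constructor
        · intro hv
          obtain ⟨hvmem, hvlt⟩ := Finset.mem_filter.mp hv
          obtain ⟨m', hm'⟩ := hrange v hvmem
          refine Finset.mem_image.mpr ⟨m', ?_, hm'⟩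
          refine Finset.mem_filter.mpr ⟨Finset.mem_univ _, ?_⟩
          have hlt2 : τ m' < τ m := by rw [hm']; exact hvlt
          exact hτs.lt_iff_lt.mp hlt2
        · intro hv
          obtain ⟨m', hm'f, heq⟩ := Finset.mem_image.mp hv
          subst heq
          exact Finset.mem_filter.mpr ⟨hτmem m', hτs (Finset.mem_filter.mp hm'f).2⟩
      rw [h1, h2]
      have hsub : ∀ v ∈ (Finset.univ.filter (fun m' : Fin t1 => m' < m)).image ⇑τ,
          v < t1 + t2 := by
        intro v hv
        obtain ⟨m', _, rfl⟩ := Finset.mem_image.mp hv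
        exact hτlt m'
      rw [Finset.card_image_of_injOn (f := fun v : ℕ => (v : ZMod (t1 + t2)))]
      swap
      · intro v hv v' hv' hvv
        have h3 := hsub v hv
        have h4 := hsub v' hv'
        have h5 := congrArg ZMod.val hvv
        rwa [ZMod.val_cast_of_lt h3, ZMod.val_cast_of_lt h4] at h5
      rw [Finset.card_image_of_injective _ hτs.injective]
      exact hfinlt m
    have hDcond : DCond t1 t2 D := by
      constructor
      · intro m m' hle
        have hgap := fin_strict_gap hτs (m'.val - m.val) m.val (by have := m'.isLt; omega)
        have hi1 : (⟨m.val, by omega⟩ : Fin t1) = m := Fin.eta m _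
        have hi2 : (⟨m.val + (m'.val - m.val), by omega⟩ : Fin t1) = m' := by
          apply Fin.ext
          simp only [Fin.val_mk]
          have hv : m.val ≤ m'.val := hle
          omega
        rw [hi1, hi2] at hgap
        have g1 := hτge m
        have g2 := hτge m'
        show τ m - m.val ≤ τ m' - m'.val
        have hv : m.val ≤ m'.val := hle
        omega
      · intro m
        rcases Nat.eq_zero_or_pos (τ m) with hz | hp
        · have hm0 : m.val = 0 := by have := hτge m; omega
          have hD0 : D m = 0 := by show τ m - m.val = 0; omega
          rw [hD0, hm0]
          simp
        · have hg := hgood (τ m) hp (hτlt m)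
          rw [hcount m] at hg
          have hτm := hτeq m
          have hexp : t1 * (D m + m.val) = t1 * D m + t1 * m.val := Nat.mul_add _ _ _
          have hexp2 : (t1 + t2) * m.val = t1 * m.val + t2 * m.val := Nat.add_mul _ _ _
          rw [← hτm] at hg
          omega
    refine ⟨⟨D, hDcond⟩, ?_⟩
    apply Subtype.ext
    show fD (t2 := t2) D = T
    rw [fD]
    ext y
    constructor
    · intro hy
      obtain ⟨m, _, hm⟩ := Finset.mem_image.mp hy
      obtain ⟨y', hy'T, hy'⟩ := hτmem' m
      have : ((D m + m.val : ℕ) : ZMod (t1 + t2)) = y' := by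
        rw [hτeq m, ← hy']
        exact ZMod.natCast_rightInverse y'
      rw [← hm, this]
      exact hy'T
    · intro hy
      have hyv : y.val ∈ T.image ZMod.val := Finset.mem_image.mpr ⟨y, hy, rfl⟩
      obtain ⟨m, hm⟩ := hrange y.val hyv
      refine Finset.mem_image.mpr ⟨m, Finset.mem_univ _, ?_⟩
      rw [hτeq m, hm]
      exact ZMod.natCast_rightInverse y

end Layer4

section Layer5

variable {t1 t2 : ℕ}

/-- prefix count of the periodic word of `T` -/
def cnt (t1 t2 : ℕ) (T : Finset (ZMod (t1 + t2))) (x : ℕ) : ℕ :=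
  ((Finset.range x).filter (fun i : ℕ => ((i : ZMod (t1 + t2)) ∈ T))).card

/-- height function -/
def Hf (t1 t2 : ℕ) (T : Finset (ZMod (t1 + t2))) (x : ℕ) : ℤ :=
  (t1 : ℤ) * x - (t1 + t2 : ℤ) * cnt t1 t2 T x

def sh (k : ZMod (t1 + t2)) (T : Finset (ZMod (t1 + t2))) : Finset (ZMod (t1 + t2)) :=
  T.image (fun z => z + k)

lemma cnt_succ (T : Finset (ZMod (t1 + t2))) (x : ℕ) :
    cnt t1 t2 T (x + 1) =
      cnt t1 t2 T x + (if ((x : ZMod (t1 + t2)) ∈ T) then 1 else 0) := by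
  rw [cnt, Finset.range_add_one, Finset.filter_insert]
  split_ifs with h
  · rw [Finset.card_insert_of_notMem (by simp)]
    rfl
  · rfl

lemma cnt_n (ht1 : 0 < t1) (ht2 : 0 < t2) (T : Finset (ZMod (t1 + t2))) :
    cnt t1 t2 T (t1 + t2) = T.card := by
  haveI : NeZero (t1 + t2) := ⟨by omega⟩
  have himg : (Finset.range (t1 + t2)).filter (fun i : ℕ => ((i : ZMod (t1 + t2)) ∈ T)) =
      T.image ZMod.val := by
    ext i
    rw [Finset.mem_filter, Finset.mem_range, Finset.mem_image]
    constructor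
    · rintro ⟨hilt, himem⟩
      exact ⟨(i : ZMod (t1 + t2)), himem, ZMod.val_cast_of_lt hilt⟩
    · rintro ⟨y, hy, rfl⟩
      exact ⟨ZMod.val_lt y, by rw [ZMod.natCast_rightInverse y]; exact hy⟩
  rw [cnt, himg, Finset.card_image_of_injective _ (ZMod.val_injective _)]

lemma cast_add_n (x : ℕ) : ((x + (t1 + t2) : ℕ) : ZMod (t1 + t2)) = (x : ZMod (t1 + t2)) := by
  rw [Nat.cast_add, ZMod.natCast_self, add_zero]

lemma cnt_add_n (ht1 : 0 < t1) (ht2 : 0 < t2) (T : Finset (ZMod (t1 + t2))) :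
    ∀ x, cnt t1 t2 T (x + (t1 + t2)) = cnt t1 t2 T x + T.card := by
  intro x
  induction x with
  | zero =>
    have h0 : cnt t1 t2 T 0 = 0 := by simp [cnt]
    rw [Nat.zero_add, h0, cnt_n ht1 ht2, Nat.zero_add]
  | succ x ih =>
    have h1 : x + 1 + (t1 + t2) = (x + (t1 + t2)) + 1 := by omega
    rw [h1, cnt_succ, ih, cnt_succ]
    have h2 : (((x + (t1 + t2) : ℕ) : ZMod (t1 + t2)) ∈ T) = (((x : ℕ) : ZMod (t1 + t2)) ∈ T) := by
      rw [cast_add_n]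
    simp only [h2]
    omega

lemma Hf_add_n (ht1 : 0 < t1) (ht2 : 0 < t2) {T : Finset (ZMod (t1 + t2))}
    (hcard : T.card = t1) (x : ℕ) : Hf t1 t2 T (x + (t1 + t2)) = Hf t1 t2 T x := by
  rw [Hf, Hf, cnt_add_n ht1 ht2, hcard]
  push_cast
  ring

lemma Hf_add_mul_n (ht1 : 0 < t1) (ht2 : 0 < t2) {T : Finset (ZMod (t1 + t2))}
    (hcard : T.card = t1) (x : ℕ) : ∀ k, Hf t1 t2 T (x + k * (t1 + t2)) = Hf t1 t2 T x := by
  intro k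
  induction k with
  | zero => simp
  | succ k ih =>
    have h1 : x + (k + 1) * (t1 + t2) = (x + k * (t1 + t2)) + (t1 + t2) := by ring
    rw [h1, Hf_add_n ht1 ht2 hcard, ih]

lemma Hf_mod (ht1 : 0 < t1) (ht2 : 0 < t2) {T : Finset (ZMod (t1 + t2))}
    (hcard : T.card = t1) (x : ℕ) : Hf t1 t2 T x = Hf t1 t2 T (x % (t1 + t2)) := by
  conv_lhs => rw [show x = x % (t1 + t2) + (x / (t1 + t2)) * (t1 + t2) by
    rw [Nat.mul_comm]; exact (Nat.mod_add_div x (t1 + t2)).symm]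
  rw [Hf_add_mul_n ht1 ht2 hcard]

lemma cnt_filter (ht1 : 0 < t1) (ht2 : 0 < t2) (T : Finset (ZMod (t1 + t2))) {x : ℕ}
    (hx : x ≤ t1 + t2) :
    cnt t1 t2 T x = (T.filter (fun y => y.val < x)).card := by
  haveI : NeZero (t1 + t2) := ⟨by omega⟩
  have himg : (Finset.range x).filter (fun i : ℕ => ((i : ZMod (t1 + t2)) ∈ T)) =
      (T.filter (fun y => y.val < x)).image ZMod.val := by
    ext i
    rw [Finset.mem_filter, Finset.mem_range, Finset.mem_image]
    constructor
    · rintro ⟨hilt, himem⟩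
      refine ⟨(i : ZMod (t1 + t2)), ?_, ZMod.val_cast_of_lt (by omega)⟩
      rw [Finset.mem_filter]
      exact ⟨himem, by rw [ZMod.val_cast_of_lt (by omega)]; exact hilt⟩
    · rintro ⟨y, hy, rfl⟩
      rw [Finset.mem_filter] at hy
      exact ⟨hy.2, by rw [ZMod.natCast_rightInverse y]; exact hy.1⟩
  rw [cnt, himg, Finset.card_image_of_injective _ (ZMod.val_injective _)]

lemma good_iff_Hle (ht1 : 0 < t1) (ht2 : 0 < t2) {T : Finset (ZMod (t1 + t2))}
    (hcard : T.card = t1) :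
    Good t1 t2 T ↔ ∀ x : ℕ, Hf t1 t2 T x ≤ 0 := by
  constructor
  · intro hgood x
    rw [Hf_mod ht1 ht2 hcard]
    set r := x % (t1 + t2) with hr
    have hrlt : r < t1 + t2 := Nat.mod_lt _ (by omega)
    rcases Nat.eq_zero_or_pos r with hz | hp
    · rw [hz]
      simp [Hf, cnt]
    · have := hgood r hp hrlt
      rw [← cnt_filter ht1 ht2 T (by omega)] at this
      rw [Hf]
      have hcast : (t1 : ℤ) * r ≤ ((t1 + t2 : ℕ) : ℤ) * cnt t1 t2 T r := by
        exact_mod_cast this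
      push_cast at hcast ⊢
      omega
  · intro hH x hx hxn
    have := hH x
    rw [Hf] at this
    rw [← cnt_filter ht1 ht2 T (by omega)]
    have : (t1 : ℤ) * x ≤ (t1 + t2 : ℤ) * cnt t1 t2 T x := by omega
    exact_mod_cast this

lemma Hf_inj (ht1 : 0 < t1) (ht2 : 0 < t2) (h : Nat.Coprime t1 t2)
    {T : Finset (ZMod (t1 + t2))} {x y : ℕ} (hx : x < t1 + t2) (hy : y < t1 + t2)
    (heq : Hf t1 t2 T x = Hf t1 t2 T y) : x = y := by
  haveI : NeZero (t1 + t2) := ⟨by omega⟩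
  rw [Hf, Hf] at heq
  have hdvd : ((t1 + t2 : ℕ) : ℤ) ∣ (t1 : ℤ) * x - (t1 : ℤ) * y := by
    refine ⟨(cnt t1 t2 T x : ℤ) - (cnt t1 t2 T y : ℤ), ?_⟩
    push_cast at heq ⊢
    linarith
  have hzm : ((t1 : ℤ) * x - (t1 : ℤ) * y : ℤ) = 0 →  True := fun _ => trivial
  -- move to ZMod
  have hcast : ((t1 : ZMod (t1 + t2)) * (x : ZMod (t1 + t2))) = (t1 : ZMod (t1 + t2)) * y := by
    have h2 : (((t1 : ℤ) * x - (t1 : ℤ) * y : ℤ) : ZMod (t1 + t2)) = 0 := by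
      rw [ZMod.intCast_zmod_eq_zero_iff_dvd]
      exact_mod_cast hdvd
    push_cast at h2
    linear_combination h2
  have hcop : Nat.Coprime t1 (t1 + t2) := by
    rw [Nat.add_comm, Nat.coprime_add_self_right]
    exact h
  have hu : IsUnit (t1 : ZMod (t1 + t2)) := (ZMod.unitOfCoprime t1 hcop).isUnit
  have hxy : (x : ZMod (t1 + t2)) = (y : ZMod (t1 + t2)) := hu.mul_left_cancel hcast
  have := congrArg ZMod.val hxy
  rwa [ZMod.val_cast_of_lt hx, ZMod.val_cast_of_lt hy] at this

lemma sh_card (k : ZMod (t1 + t2)) (T : Finset (ZMod (t1 + t2))) :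
    (sh k T).card = T.card :=
  Finset.card_image_of_injective _ (add_left_injective k)

lemma sh_sh (k k' : ZMod (t1 + t2)) (T : Finset (ZMod (t1 + t2))) :
    sh k' (sh k T) = sh (k + k') T := by
  rw [sh, sh, sh, Finset.image_image]
  congr 1
  funext z
  simp [add_assoc]

lemma sh_zero (T : Finset (ZMod (t1 + t2))) : sh 0 T = T := by
  rw [sh]
  simp

lemma mem_sh {k : ZMod (t1 + t2)} {T : Finset (ZMod (t1 + t2))} {z : ZMod (t1 + t2)} :
    z ∈ sh k T ↔ z - k ∈ T := by
  rw [sh, Finset.mem_image]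
  constructor
  · rintro ⟨t, ht, rfl⟩
    simpa using ht
  · intro hz
    exact ⟨z - k, hz, by ring⟩

lemma mem_sh_nat (ht1 : 0 < t1) (ht2 : 0 < t2) (k : ZMod (t1 + t2))
    (T : Finset (ZMod (t1 + t2))) (x : ℕ) :
    ((x : ZMod (t1 + t2)) ∈ sh k T) ↔
      (((x + (-k).val : ℕ) : ZMod (t1 + t2)) ∈ T) := by
  haveI : NeZero (t1 + t2) := ⟨by omega⟩
  rw [mem_sh]
  have : ((x + (-k).val : ℕ) : ZMod (t1 + t2)) = (x : ZMod (t1 + t2)) - k := by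
    push_cast
    rw [ZMod.natCast_rightInverse (-k)]
    ring
  rw [this]

lemma cnt_sh (ht1 : 0 < t1) (ht2 : 0 < t2) (k : ZMod (t1 + t2))
    (T : Finset (ZMod (t1 + t2))) :
    ∀ x, cnt t1 t2 (sh k T) x + cnt t1 t2 T ((-k).val) = cnt t1 t2 T (x + (-k).val) := by
  intro x
  induction x with
  | zero =>
    have h0 : cnt t1 t2 (sh k T) 0 = 0 := by simp [cnt]
    rw [h0, Nat.zero_add, Nat.zero_add]
  | succ x ih =>
    have h1 : x + 1 + (-k).val = (x + (-k).val) + 1 := by omega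
    rw [h1, cnt_succ, cnt_succ]
    have h2 : (((x : ℕ) : ZMod (t1 + t2)) ∈ sh k T) =
        ((((x + (-k).val : ℕ)) : ZMod (t1 + t2)) ∈ T) := by
      rw [eq_iff_iff]
      exact mem_sh_nat ht1 ht2 k T x
    simp only [h2]
    omega

lemma Hf_sh (ht1 : 0 < t1) (ht2 : 0 < t2) (k : ZMod (t1 + t2))
    (T : Finset (ZMod (t1 + t2))) (x : ℕ) :
    Hf t1 t2 (sh k T) x = Hf t1 t2 T (x + (-k).val) - Hf t1 t2 T ((-k).val) := by
  have hc := cnt_sh ht1 ht2 k T x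
  have hc' : (cnt t1 t2 (sh k T) x : ℤ) =
      (cnt t1 t2 T (x + (-k).val) : ℤ) - (cnt t1 t2 T ((-k).val) : ℤ) := by
    have h0 := congrArg (Nat.cast : ℕ → ℤ) hc
    push_cast at h0
    linarith
  rw [Hf, Hf, Hf, hc']
  push_cast
  ring

/-- goodness of a shift is equivalent to the shift amount being a global maximum of Hf -/
lemma good_sh_iff (ht1 : 0 < t1) (ht2 : 0 < t2) {T : Finset (ZMod (t1 + t2))}
    (hcard : T.card = t1) (k : ZMod (t1 + t2)) :
    Good t1 t2 (sh k T) ↔ ∀ y : ℕ, Hf t1 t2 T y ≤ Hf t1 t2 T ((-k).val) := by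
  haveI : NeZero (t1 + t2) := ⟨by omega⟩
  have hshcard : (sh k T).card = t1 := by rw [sh_card, hcard]
  rw [good_iff_Hle ht1 ht2 hshcard]
  constructor
  · intro hH y
    have hkv : (-k).val ≤ t1 + t2 := le_of_lt (ZMod.val_lt _)
    have h1 := hH (y + ((t1 + t2) - (-k).val))
    rw [Hf_sh ht1 ht2] at h1
    have h2 : y + ((t1 + t2) - (-k).val) + (-k).val = y + (t1 + t2) := by omega
    rw [h2, Hf_add_n ht1 ht2 hcard] at h1
    omega
  · intro hmax x
    rw [Hf_sh ht1 ht2]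
    have := hmax (x + (-k).val)
    omega

/-- every orbit has a unique argmax position -/
noncomputable def argmax (ht1 : 0 < t1) (ht2 : 0 < t2) (T : Finset (ZMod (t1 + t2))) : ℕ :=
  Classical.choose (Finset.exists_max_image (Finset.range (t1 + t2)) (Hf t1 t2 T)
    ⟨0, Finset.mem_range.mpr (by omega)⟩)

lemma argmax_spec (ht1 : 0 < t1) (ht2 : 0 < t2) {T : Finset (ZMod (t1 + t2))}
    (hcard : T.card = t1) :
    argmax ht1 ht2 T < t1 + t2 ∧
      ∀ y : ℕ, Hf t1 t2 T y ≤ Hf t1 t2 T (argmax ht1 ht2 T) := by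
  obtain ⟨hmem, hspec⟩ := Classical.choose_spec (Finset.exists_max_image
    (Finset.range (t1 + t2)) (Hf t1 t2 T) ⟨0, Finset.mem_range.mpr (by omega)⟩)
  refine ⟨Finset.mem_range.mp hmem, ?_⟩
  intro y
  rw [Hf_mod ht1 ht2 hcard y]
  exact hspec _ (Finset.mem_range.mpr (Nat.mod_lt _ (by omega)))

lemma good_sh_iff_argmax (ht1 : 0 < t1) (ht2 : 0 < t2) (h : Nat.Coprime t1 t2)
    {T : Finset (ZMod (t1 + t2))} (hcard : T.card = t1) (k : ZMod (t1 + t2)) :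
    Good t1 t2 (sh k T) ↔ (-k).val = argmax ht1 ht2 T := by
  haveI : NeZero (t1 + t2) := ⟨by omega⟩
  obtain ⟨hlt, hmax⟩ := argmax_spec ht1 ht2 hcard
  rw [good_sh_iff ht1 ht2 hcard]
  constructor
  · intro hloc
    apply Hf_inj ht1 ht2 h (ZMod.val_lt _) hlt
    exact le_antisymm (hmax _) (hloc _)
  · intro heq
    rw [heq]
    exact hmax

noncomputable def cycleEquiv (ht1 : 0 < t1) (ht2 : 0 < t2) (h : Nat.Coprime t1 t2) :
    {T : Finset (ZMod (t1 + t2)) // T.card = t1 ∧ Good t1 t2 T} × ZMod (t1 + t2) ≃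
      {T : Finset (ZMod (t1 + t2)) // T.card = t1} := by
  haveI : NeZero (t1 + t2) := ⟨by omega⟩
  refine Equiv.ofBijective
    (fun p => ⟨sh p.2 p.1.1, by rw [sh_card]; exact p.1.2.1⟩) ⟨?_, ?_⟩
  · rintro ⟨⟨G, hGc, hGg⟩, k⟩ ⟨⟨G', hGc', hGg'⟩, k'⟩ heq
    have heq' : sh k G = sh k' G' := congrArg Subtype.val heq
    have hback : G = sh (-k) (sh k G) := by
      rw [sh_sh, add_neg_cancel, sh_zero]
    have hback' : G' = sh (-k') (sh k' G') := by
      rw [sh_sh, add_neg_cancel, sh_zero]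
    have hTc : (sh k G).card = t1 := by rw [sh_card]; exact hGc
    have h1 : Good t1 t2 (sh (-k) (sh k G)) := by rw [← hback]; exact hGg
    have h2 : Good t1 t2 (sh (-k') (sh k G)) := by rw [heq', ← hback']; exact hGg'
    rw [good_sh_iff_argmax ht1 ht2 h hTc] at h1 h2
    have hkk : (- -k).val = (- -k').val := by rw [h1, h2]
    rw [neg_neg, neg_neg] at hkk
    have hkeq : k = k' := ZMod.val_injective _ hkk
    subst hkeq
    have hGeq : G = G' := by rw [hback, hback', heq']
    subst hGeq
    rfl
  · rintro ⟨T, hTc⟩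
    obtain ⟨hlt, hmax⟩ := argmax_spec ht1 ht2 (T := T) hTc
    set ka : ZMod (t1 + t2) := ((argmax ht1 ht2 T : ℕ) : ZMod (t1 + t2)) with hka
    have hgood : Good t1 t2 (sh (-ka) T) := by
      rw [good_sh_iff_argmax ht1 ht2 h hTc]
      rw [neg_neg, hka, ZMod.val_cast_of_lt hlt]
    refine ⟨⟨⟨sh (-ka) T, by rw [sh_card]; exact hTc, hgood⟩, ka⟩, ?_⟩
    apply Subtype.ext
    show sh ka (sh (-ka) T) = T
    rw [sh_sh, neg_add_cancel, sh_zero]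

end Layer5

end Anderson

namespace Anderson

lemma rank_inj {B : Finset ℕ} {b b' : ℕ} (hb : b ∈ B) (hb' : b' ∈ B)
    (hr : (B.filter (fun x => b < x)).card = (B.filter (fun x => b' < x)).card) : b = b' := by
  have key : ∀ c c' : ℕ, c ∈ B → c' ∈ B → c < c' →
      (B.filter (fun x => c' < x)).card < (B.filter (fun x => c < x)).card := by
    intro c c' hc hc' hlt
    apply Finset.card_lt_card
    rw [Finset.ssubset_iff_of_subset]
    · exact ⟨c', Finset.mem_filter.mpr ⟨hc', hlt⟩, by simp⟩
    · intro x hx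
      simp only [Finset.mem_filter] at hx ⊢
      exact ⟨hx.1, by omega⟩
  rcases lt_trichotomy b b' with hl | he | hg
  · exact absurd hr (Nat.ne_of_gt (key b b' hb hb' hl))
  · exact he
  · exact absurd hr (Nat.ne_of_lt (key b' b hb' hb hg))

lemma betaSet_injective : Function.Injective betaSet := by
  intro Y₁ Y₂ heq
  have hk : Y₁.colLen 0 = Y₂.colLen 0 := by
    rw [← card_betaSet, ← card_betaSet, heq]
  have hrow : ∀ i, Y₁.rowLen i = Y₂.rowLen i := by
    intro i
    by_cases hi : i < Y₁.colLen 0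
    · have hi2 : i < Y₂.colLen 0 := by omega
      have h1 : hb Y₁ i ∈ betaSet Y₁ := (mem_betaSet Y₁).mpr ⟨i, hi, rfl⟩
      have h2 : hb Y₂ i ∈ betaSet Y₂ := (mem_betaSet Y₂).mpr ⟨i, hi2, rfl⟩
      have r1 := rank_betaSet Y₁ hi
      have r2 := rank_betaSet Y₂ hi2
      rw [heq] at h1 r1
      have : hb Y₁ i = hb Y₂ i := rank_inj h1 h2 (by rw [r1, r2])
      unfold hb at this
      omega
    · rw [rowLen_zero_of_ge Y₁ (by omega), rowLen_zero_of_ge Y₂ (by omega)]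
  ext ⟨i, j⟩
  simp only [YoungDiagram.mem_cells, YoungDiagram.mem_iff_lt_rowLen, hrow]

section FromBeta

variable (B : Finset ℕ)

def slen : ℕ := (B.sort (· ≥ ·)).length

def sl (n : ℕ) : ℕ := (B.sort (· ≥ ·)).getD n 0

lemma slen_card : slen B = B.card := Finset.length_sort _

lemma sl_mem_iff {m : ℕ} : m ∈ B ↔ ∃ i < slen B, sl B i = m := by
  rw [← Finset.mem_sort (· ≥ ·), List.mem_iff_getElem]
  constructor
  · rintro ⟨i, hi, heq⟩
    exact ⟨i, hi, by rw [sl, List.getD_eq_getElem _ _ hi]; exact heq⟩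
  · rintro ⟨i, hi, heq⟩
    exact ⟨i, hi, by rw [sl, List.getD_eq_getElem _ _ hi] at heq; exact heq⟩

lemma sl_strict_adj {i : ℕ} (hi : i + 1 < slen B) : sl B (i + 1) < sl B i := by
  have hlen : (B.sort (· ≥ ·)).length = slen B := rfl
  have hs := Finset.pairwise_sort B (· ≥ ·)
  have hnd := Finset.sort_nodup B (· ≥ ·)
  rw [List.pairwise_iff_getElem] at hs
  have h1 := hs i (i + 1) (by omega) hi (by omega)
  have h2 : (B.sort (· ≥ ·))[i]'(by omega) ≠ (B.sort (· ≥ ·))[i+1]'hi := by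
    intro hc
    have := (List.Nodup.getElem_inj_iff hnd).mp hc
    omega
  rw [sl, sl, List.getD_eq_getElem _ _ hi, List.getD_eq_getElem _ _ (by omega : i < _)]
  omega

lemma sl_gap : ∀ (d i : ℕ), i + d < slen B → sl B (i + d) + d ≤ sl B i := by
  intro d
  induction d with
  | zero => intro i h; simp
  | succ d ih =>
    intro i h
    have h1 := ih (i + 1) (by omega)
    have h2 := sl_strict_adj B (i := i) (by omega)
    have h3 : i + 1 + d = i + (d + 1) := by omega
    rw [h3] at h1
    omega

def rowLensW : List ℕ :=
  List.ofFn (fun i : Fin (slen B) => sl B i - (slen B - 1 - i.val))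

lemma rowLensW_length : (rowLensW B).length = slen B := by
  simp [rowLensW]

lemma rowLensW_get {i : ℕ} (hi : i < slen B) :
    (rowLensW B)[i]'(by rw [rowLensW_length]; exact hi) =
      sl B i - (slen B - 1 - i) := by
  simp [rowLensW]

lemma rowLensW_sorted : (rowLensW B).SortedGE := by
  rw [List.sortedGE_iff_pairwise, List.pairwise_iff_getElem]
  intro i j hi hj hij
  rw [rowLensW_length] at hi hj
  rw [rowLensW_get B hi, rowLensW_get B hj]
  have hgap := sl_gap B (j - i) i (by omega)
  have h3 : i + (j - i) = j := by omega
  rw [h3] at hgap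
  omega

def fromBeta : YoungDiagram := YoungDiagram.ofRowLens (rowLensW B) (rowLensW_sorted B)

variable {B}

lemma sl_pos (h0 : 0 ∉ B) {i : ℕ} (hi : i < slen B) : slen B - i ≤ sl B i := by
  have hlast : 1 ≤ sl B (slen B - 1) := by
    rcases Nat.eq_zero_or_pos (sl B (slen B - 1)) with hz | hp
    · exfalso
      apply h0
      rw [sl_mem_iff]
      exact ⟨slen B - 1, by omega, hz⟩
    · exact hp
  have hgap := sl_gap B (slen B - 1 - i) i (by omega)
  have h3 : i + (slen B - 1 - i) = slen B - 1 := by omega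
  rw [h3] at hgap
  omega

lemma rowLen_fromBeta {i : ℕ} (hi : i < slen B) :
    (fromBeta B).rowLen i = sl B i - (slen B - 1 - i) := by
  have h2 := YoungDiagram.rowLen_ofRowLens (w := rowLensW B) (hw := rowLensW_sorted B)
    ⟨i, by rw [rowLensW_length]; exact hi⟩
  rw [fromBeta]
  rw [h2]
  simpa using rowLensW_get B hi

lemma rowLen_fromBeta_top : (fromBeta B).rowLen (slen B) = 0 := by
  by_contra hh
  have hmem : (slen B, 0) ∈ fromBeta B :=
    YoungDiagram.mem_iff_lt_rowLen.mpr (by omega)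
  rw [fromBeta, YoungDiagram.mem_ofRowLens] at hmem
  obtain ⟨hlen, _⟩ := hmem
  rw [rowLensW_length] at hlen
  omega

lemma colLen_fromBeta (h0 : 0 ∉ B) : (fromBeta B).colLen 0 = slen B := by
  apply le_antisymm
  · by_contra hh
    push_neg at hh
    have hmem : (slen B, 0) ∈ fromBeta B := YoungDiagram.mem_iff_lt_colLen.mpr hh
    have := YoungDiagram.mem_iff_lt_rowLen.mp hmem
    rw [rowLen_fromBeta_top] at this
    omega
  · rcases Nat.eq_zero_or_pos (slen B) with hz | hp
    · omega
    · have hi : slen B - 1 < slen B := by omega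
      have hpos : 0 < (fromBeta B).rowLen (slen B - 1) := by
        rw [rowLen_fromBeta hi]
        have := sl_pos h0 hi
        omega
      have hmem : (slen B - 1, 0) ∈ fromBeta B :=
        YoungDiagram.mem_iff_lt_rowLen.mpr hpos
      have := YoungDiagram.mem_iff_lt_colLen.mp hmem
      omega

lemma betaSet_fromBeta (h0 : 0 ∉ B) : betaSet (fromBeta B) = B := by
  ext m
  rw [mem_betaSet, sl_mem_iff]
  constructor
  · rintro ⟨i, hi, heq⟩
    rw [colLen_fromBeta h0] at hi
    refine ⟨i, hi, ?_⟩
    rw [← heq]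
    unfold hb
    rw [rowLen_fromBeta hi, colLen_fromBeta h0]
    have := sl_pos h0 hi
    omega
  · rintro ⟨i, hi, heq⟩
    refine ⟨i, by rw [colLen_fromBeta h0]; exact hi, ?_⟩
    unfold hb
    rw [rowLen_fromBeta hi, colLen_fromBeta h0, heq]
    have := sl_pos h0 hi
    rw [heq] at this
    omega

lemma zero_not_mem_betaSet (Y : YoungDiagram) : 0 ∉ betaSet Y := by
  intro hc
  obtain ⟨i, hi, heq⟩ := (mem_betaSet Y).mp hc
  have : 0 < Y.rowLen i := by
    rw [← YoungDiagram.mem_iff_lt_rowLen]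
    exact YoungDiagram.up_left_mem Y (le_refl i) (Nat.zero_le 0)
      (YoungDiagram.mem_iff_lt_colLen.mpr hi)
  unfold hb at heq
  omega

end FromBeta

def coreEquiv (t1 t2 : ℕ) (h1 : 0 < t1) (h2 : 0 < t2) :
    {Y : YoungDiagram // IsCore Y t1 ∧ IsCore Y t2} ≃
      {B : Finset ℕ // 0 ∉ B ∧ Closed t1 B ∧ Closed t2 B} where
  toFun Y := ⟨betaSet Y.1, zero_not_mem_betaSet Y.1,
    (isCore_iff Y.1 h1).mp Y.2.1, (isCore_iff Y.1 h2).mp Y.2.2⟩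
  invFun B := ⟨fromBeta B.1,
    (isCore_iff _ h1).mpr (by rw [betaSet_fromBeta B.2.1]; exact B.2.2.1),
    (isCore_iff _ h2).mpr (by rw [betaSet_fromBeta B.2.1]; exact B.2.2.2)⟩
  left_inv Y := by
    apply Subtype.ext
    exact betaSet_injective (betaSet_fromBeta (zero_not_mem_betaSet Y.1))
  right_inv B := Subtype.ext (betaSet_fromBeta B.2.1)

end Anderson

theorem anderson (t1 t2 : ℕ) (h1 : 0 < t1) (h2 : 0 < t2) (h : Nat.Coprime t1 t2) :
    {Y : YoungDiagram | IsCore Y t1 ∧ IsCore Y t2}.ncard =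
      Nat.factorial (t1 + t2 - 1) / (Nat.factorial t1 * Nat.factorial t2) := by
  classical
  haveI : NeZero (t1 + t2) := ⟨by omega⟩
  rw [← Nat.card_coe_set_eq]
  have e0 : ↥{Y : YoungDiagram | IsCore Y t1 ∧ IsCore Y t2} ≃
      {Y : YoungDiagram // IsCore Y t1 ∧ IsCore Y t2} :=
    Equiv.subtypeEquivRight (fun _ => Iff.rfl)
  have E := e0.trans ((Anderson.coreEquiv t1 t2 h1 h2).trans
    ((Anderson.abacusEquiv h1 (t2 := t2)).trans
      ((Anderson.nuEquiv h1 h h2).trans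
        ((Anderson.dEquiv h1).trans (Anderson.goodEquiv h1 h2)))))
  rw [Nat.card_congr E]
  have hcyc := Nat.card_congr (Anderson.cycleEquiv h1 h2 h)
  rw [Nat.card_prod] at hcyc
  have hz : Nat.card (ZMod (t1 + t2)) = t1 + t2 := by
    rw [Nat.card_eq_fintype_card, ZMod.card]
  have hall : Nat.card {T : Finset (ZMod (t1 + t2)) // T.card = t1} = (t1 + t2).choose t1 := by
    rw [Nat.card_eq_fintype_card, Fintype.card_finset_len, ZMod.card]
  rw [hz, hall] at hcyc
  set G := Nat.card {T : Finset (ZMod (t1 + t2)) // T.card = t1 ∧ Anderson.Good t1 t2 T} with hG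
  have hfac := Nat.choose_mul_factorial_mul_factorial (show t1 ≤ t1 + t2 by omega)
  have hsub : t1 + t2 - t1 = t2 := by omega
  rw [hsub] at hfac
  have hnfact : (t1 + t2).factorial = (t1 + t2) * (t1 + t2 - 1).factorial := by
    have h0 : t1 + t2 = (t1 + t2 - 1) + 1 := by omega
    calc (t1 + t2).factorial = ((t1 + t2 - 1) + 1).factorial := by rw [← h0]
      _ = ((t1 + t2 - 1) + 1) * (t1 + t2 - 1).factorial := Nat.factorial_succ _
      _ = (t1 + t2) * (t1 + t2 - 1).factorial := by rw [← h0]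
  have hkey : (t1 + t2) * (G * (t1.factorial * t2.factorial)) =
      (t1 + t2) * (t1 + t2 - 1).factorial := by
    calc (t1 + t2) * (G * (t1.factorial * t2.factorial))
        = G * (t1 + t2) * t1.factorial * t2.factorial := by ring
      _ = (t1 + t2).choose t1 * t1.factorial * t2.factorial := by rw [hcyc]
      _ = (t1 + t2).factorial := hfac
      _ = (t1 + t2) * (t1 + t2 - 1).factorial := hnfact
  have hG2 : G * (t1.factorial * t2.factorial) = (t1 + t2 - 1).factorial :=
    Nat.eq_of_mul_eq_mul_left (by omega) hkey
  have hpos : 0 < t1.factorial * t2.factorial :=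
    Nat.mul_pos (Nat.factorial_pos _) (Nat.factorial_pos _)
  exact (Nat.div_eq_of_eq_mul_left hpos hG2.symm).symm
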